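/- With m = n−1, the complex dimension of ker(φ) equals the n-th Catalan number C_n = (1/(n+1))·binom(2n,n). (Equivalently, the representation ρ_{n,3} of S_{2n−1} on the multilinear component of the free LAnKe on 2n−1 generators has dimension given by the Catalan number C_n.) -/

import Mathlib

open Finset

/-- Number of inversions of a list. -/
def invCount {α : Type*} [LinearOrder α] (l : List α) : ℕ :=
  (Finset.univ.filter
    (fun p : Fin l.length × Fin l.length => p.1 < p.2 ∧ l.get p.2 < l.get p.1)).card

/-- The sign `(-1)^(number of inversions)` of the permutation sorting a list
with pairwise distinct entries into increasing order. -/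
noncomputable def invSign {α : Type*} [LinearOrder α] (l : List α) : ℂ :=
  (-1) ^ invCount l

/-- Replace the entry `a` by `b` (in place) in a list. -/
def replaceOne {α : Type*} [DecidableEq α] (l : List α) (a b : α) : List α :=
  l.map fun z => if z = a then b else z

open scoped Classical in
/-- Dirac delta: the basis vector corresponding to an index `r`. -/
noncomputable def delta {β : Type*} (r : β) : β → ℂ := fun r' => if r' = r then 1 else 0

/-- Index for the basis of ordered column tabloids of shape `(2^m, 1^{n-m})` on
`{1, …, n+m}` (identified with `Fin (n+m)`): such a tabloid is recorded by the
set `T` of entries of its first column (the second column is the complement). -/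
abbrev Col (n m : ℕ) := {T : Finset (Fin (n + m)) // T.card = n}

/-- The space `M̃` of column tabloids of shape `(2^m, 1^{n-m})`. -/
abbrev Mt (n m : ℕ) := Col n m → ℂ

lemma card_compl' {n m : ℕ} (T : Col n m) : (T.1ᶜ).card = m := by
  rw [Finset.card_compl, T.2, Fintype.card_fin]
  omega

/-- `yel T j` is the `(j+1)`-st smallest element of the complement of `T`
(i.e. of the second column). -/
noncomputable def yel {n m : ℕ} (T : Col n m) (j : Fin m) : Fin (n + m) :=
  (T.1ᶜ).orderEmbOfFin (card_compl' T) j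

lemma yel_not_mem {n m : ℕ} (T : Col n m) (j : Fin m) : yel T j ∉ T.1 :=
  Finset.mem_compl.mp (Finset.orderEmbOfFin_mem (T.1ᶜ) (card_compl' T) j)

/-- The first column obtained from `T` after exchanging `x ∈ T` with the
`(j+1)`-st smallest element of the complement. -/
noncomputable def swapSet {n m : ℕ} (T : Col n m) (x : Fin (n + m)) (j : Fin m) :
    Finset (Fin (n + m)) :=
  insert (yel T j) (T.1.erase x)

lemma swapSet_card {n m : ℕ} (T : Col n m) {x : Fin (n + m)} (hx : x ∈ T.1) (j : Fin m) :
    (swapSet T x j).card = n := by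
  have h0 : 0 < n := T.2 ▸ Finset.card_pos.mpr ⟨x, hx⟩
  rw [swapSet, Finset.card_insert_of_notMem
      (fun h => yel_not_mem T j (Finset.mem_of_mem_erase h)),
    Finset.card_erase_of_mem hx, T.2]
  omega

/-- `swap_{x,j}(T)`: the signed basis vector obtained from `T` by exchanging
`x` (in the first column) with the `(j+1)`-st entry of the second column in
place, the sign `ε` being the product of the signs of the two permutations
re-sorting the two columns. -/
noncomputable def swapTerm {n m : ℕ} (T : Col n m) (x : {a // a ∈ T.1}) (j : Fin m) :
    Mt n m :=
  (invSign (replaceOne (T.1.sort (· ≤ ·)) x.1 (yel T j)) *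
      invSign (replaceOne ((T.1ᶜ).sort (· ≤ ·)) (yel T j) x.1)) •
    delta (⟨swapSet T x.1 j, swapSet_card T x.2 j⟩ : Col n m)

/-- The operator `η` on the basis vector `v_T`. -/
noncomputable def etaBasis {n m : ℕ} (T : Col n m) : Mt n m :=
  (m : ℂ) • delta T - ∑ j : Fin m, ∑ x ∈ T.1.attach, swapTerm T x j

/-- The operator `η : M̃ → M̃`, extended linearly from the basis. -/
noncomputable def etaFun {n m : ℕ} (f : Mt n m) : Mt n m :=
  ∑ T : Col n m, f T • etaBasis T

/-- `η` as a linear map. -/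
noncomputable def etaLin (n m : ℕ) : Mt n m →ₗ[ℂ] Mt n m where
  toFun := etaFun
  map_add' f g := by
    simp [etaFun, add_smul, Finset.sum_add_distrib]
  map_smul' c f := by
    simp [etaFun, Finset.smul_sum, smul_smul]

/-- The sign picked up when re-sorting the two columns after relabelling by `σ`. -/
noncomputable def actSign {n m : ℕ} (σ : Equiv.Perm (Fin (n + m))) (T : Col n m) : ℂ :=
  invSign ((T.1.sort (· ≤ ·)).map ⇑σ) * invSign (((T.1ᶜ).sort (· ≤ ·)).map ⇑σ)

lemma image_card {n m : ℕ} (σ : Equiv.Perm (Fin (n + m))) (T : Col n m) :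
    (T.1.image ⇑σ).card = n := by
  rw [Finset.card_image_of_injective _ σ.injective, T.2]

/-- The (signed) action of `S_{n+m}` on the space of column tabloids:
`σ • v_T = sgn(sort₁) sgn(sort₂) v_{σ(T)}`, extended linearly. -/
noncomputable def act {n m : ℕ} (σ : Equiv.Perm (Fin (n + m))) (f : Mt n m) : Mt n m :=
  ∑ T : Col n m, f T •
    (actSign σ T • delta (⟨T.1.image ⇑σ, image_card σ T⟩ : Col n m))

section SpechtSide

variable (γ : Type*) [Fintype γ] [DecidableEq γ] (p q : ℕ)

/-- A bijective Young tableau of the two-column shape with column lengths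
`p` (first column) and `q` (second column), with entries in `γ`:
a bijection from the cells to the entries. -/
abbrev Tabl := (Fin p ⊕ Fin q) ≃ γ

/-- `rows` is a row tabloid of shape `(2^q, 1^{p-q})`: the first `q` rows are
unordered pairs, the remaining rows singletons, all pairwise disjoint
(together they then necessarily partition `γ`). -/
def IsRowTab (rows : Fin p → Finset γ) : Prop :=
  (∀ i, (rows i).card = if (i : ℕ) < q then 2 else 1) ∧
  ∀ i j, i ≠ j → Disjoint (rows i) (rows j)

/-- Row tabloids of shape `(2^q, 1^{p-q})`. -/
abbrev RowTab := {rows : Fin p → Finset γ // IsRowTab γ p q rows}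

/-- The permutation module `M^{(2^q,1^{p-q})}`, with basis the row tabloids. -/
abbrev MP := RowTab γ p q → ℂ

variable {γ p q}

/-- The rows of a tableau. -/
def rowsOf (t : Tabl γ p q) : Fin p → Finset γ := fun i =>
  if h : (i : ℕ) < q then {t (Sum.inl i), t (Sum.inr ⟨(i : ℕ), h⟩)}
  else {t (Sum.inl i)}

lemma mem_rowsOf {t : Tabl γ p q} {i : Fin p} {a : γ} (ha : a ∈ rowsOf t i) :
    a = t (Sum.inl i) ∨ ∃ h : (i : ℕ) < q, a = t (Sum.inr ⟨(i : ℕ), h⟩) := by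
  unfold rowsOf at ha
  split_ifs at ha with h
  · rcases Finset.mem_insert.mp ha with h1 | h1
    · exact Or.inl h1
    · exact Or.inr ⟨h, Finset.mem_singleton.mp h1⟩
  · exact Or.inl (Finset.mem_singleton.mp ha)

lemma isRowTab_rowsOf (t : Tabl γ p q) : IsRowTab γ p q (rowsOf t) := by
  constructor
  · intro i
    by_cases h : (i : ℕ) < q
    · rw [rowsOf, dif_pos h, if_pos h]
      exact Finset.card_pair (t.injective.ne (by simp))
    · rw [rowsOf, dif_neg h, if_neg h]
      exact Finset.card_singleton _
  · intro i j hij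
    rw [Finset.disjoint_left]
    intro a ha hb
    rcases mem_rowsOf ha with h1 | ⟨hi, h1⟩ <;> rcases mem_rowsOf hb with h2 | ⟨hj, h2⟩
    · exact hij (Sum.inl.inj (t.injective (h1.symm.trans h2)))
    · exact Sum.inl_ne_inr (t.injective (h1.symm.trans h2))
    · exact Sum.inr_ne_inl (t.injective (h1.symm.trans h2))
    · refine hij (Fin.ext ?_)
      have h3 := Sum.inr.inj (t.injective (h1.symm.trans h2))
      simpa using congrArg Fin.val h3

/-- The row tabloid `{t}` of a tableau `t`. -/
def rowTabOf (t : Tabl γ p q) : RowTab γ p q := ⟨rowsOf t, isRowTab_rowsOf t⟩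

/-- The column stabilizer `C_t` of a tableau: permutations preserving each
column setwise. -/
def colStab (t : Tabl γ p q) : Finset (Equiv.Perm γ) :=
  Finset.univ.filter fun σ =>
    (∀ i : Fin p, ∃ i' : Fin p, σ (t (Sum.inl i)) = t (Sum.inl i')) ∧
    (∀ j : Fin q, ∃ j' : Fin q, σ (t (Sum.inr j)) = t (Sum.inr j'))

/-- The polytabloid `ε_t = ∑_{β ∈ C_t} sgn(β) {β t}`. -/
noncomputable def polytab (t : Tabl γ p q) : MP γ p q :=
  ∑ σ ∈ colStab t, ((Equiv.Perm.sign σ : ℤ) : ℂ) • delta (rowTabOf (t.trans σ))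

variable (γ p q) in
/-- The Specht module `S^{(2^q,1^{p-q})}`: the span of all polytabloids. -/
noncomputable def SpechtMod : Submodule ℂ (MP γ p q) :=
  Submodule.span ℂ (Set.range (polytab (γ := γ) (p := p) (q := q)))

/-- The entrywise action of a permutation on a row tabloid. -/
def rowAct (σ : Equiv.Perm γ) (r : RowTab γ p q) : RowTab γ p q :=
  ⟨fun i => (r.1 i).image ⇑σ, by
    obtain ⟨h1, h2⟩ := r.2
    refine ⟨fun i => ?_, fun i j hij => ?_⟩
    · rw [Finset.card_image_of_injective _ σ.injective]; exact h1 i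
    · exact (Finset.disjoint_image σ.injective).mpr (h2 i j hij)⟩

/-- The entrywise `S_N`-action on the permutation module. -/
noncomputable def actP (σ : Equiv.Perm γ) (f : MP γ p q) : MP γ p q :=
  fun r => f (rowAct σ⁻¹ r)

end SpechtSide

/-- The tableau `t(T)` whose first column is `T` in increasing order and whose
second column is the complement of `T` in increasing order. -/
noncomputable def tabOf {n m : ℕ} (T : Col n m) : Tabl (Fin (n + m)) n m :=
  Equiv.ofBijective
    (Sum.elim (fun i => T.1.orderEmbOfFin T.2 i)
      (fun j => (T.1ᶜ).orderEmbOfFin (card_compl' T) j))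
    (by
      rw [Fintype.bijective_iff_injective_and_card]
      refine ⟨?_, by simp⟩
      rintro (i | i) (j | j) h <;> simp only [Sum.elim_inl, Sum.elim_inr] at h
      · exact congrArg Sum.inl ((T.1.orderEmbOfFin T.2).injective h)
      · have h1 := Finset.orderEmbOfFin_mem T.1 T.2 i
        have h2 := Finset.orderEmbOfFin_mem (T.1ᶜ) (card_compl' T) j
        rw [h] at h1
        simp only [Finset.mem_compl] at h2
        exact absurd h1 h2
      · have h1 := Finset.orderEmbOfFin_mem T.1 T.2 j
        have h2 := Finset.orderEmbOfFin_mem (T.1ᶜ) (card_compl' T) i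
        rw [← h] at h1
        simp only [Finset.mem_compl] at h2
        exact absurd h1 h2
      · exact congrArg Sum.inr (((T.1ᶜ).orderEmbOfFin (card_compl' T)).injective h))

/-- The `S_N`-equivariant map `α : M̃ → M^{(2^m,1^{n-m})}`, sending `v_T` to the
polytabloid `ε_{t(T)}` (its image is the Specht module). -/
noncomputable def alphaLin (n m : ℕ) : Mt n m →ₗ[ℂ] MP (Fin (n + m)) n m where
  toFun f := ∑ T : Col n m, f T • polytab (tabOf T)
  map_add' f g := by simp [add_smul, Finset.sum_add_distrib]
  map_smul' c f := by simp [Finset.smul_sum, smul_smul]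

/-- `φ(v_T)`, encoding the generalized Jacobi identity (for shape `(2^{n-1},1)`,
i.e. `n = m + 1`):
`φ(v_T) = v_T − ∑_{i=1}^n (−1)^{n−i} sgn(c_i) v_{Tᶜ ∪ {x_i}}` where
`x_i` is the `i`-th smallest element of `T` and `c_i` sorts `(y_1,…,y_{n−1},x_i)`. -/
noncomputable def phiBasis {n m : ℕ} (h : n = m + 1) (T : Col n m) : Mt n m :=
  delta T - ∑ i : Fin n,
    ((-1 : ℂ) ^ (n - 1 - (i : ℕ)) *
        invSign ((T.1ᶜ).sort (· ≤ ·) ++ [T.1.orderEmbOfFin T.2 i])) •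
      delta (⟨insert (T.1.orderEmbOfFin T.2 i) T.1ᶜ, by
        rw [Finset.card_insert_of_notMem (by
            simpa using Finset.orderEmbOfFin_mem T.1 T.2 i),
          card_compl']
        omega⟩ : Col n m)

/-- The map `φ : M̃ → M̃`, extended linearly; `ker φ ≅ ρ_{n,3}`. -/
noncomputable def phiFun {n m : ℕ} (h : n = m + 1) (f : Mt n m) : Mt n m :=
  ∑ T : Col n m, f T • phiBasis h T

/-- `φ` as a linear map. -/
noncomputable def phiLin (n m : ℕ) (h : n = m + 1) : Mt n m →ₗ[ℂ] Mt n m where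
  toFun := phiFun h
  map_add' f g := by simp [phiFun, add_smul, Finset.sum_add_distrib]
  map_smul' c f := by simp [phiFun, Finset.smul_sum, smul_smul]


namespace CatAux

variable {N : ℕ}

abbrev Sub (N k : ℕ) := {S : Finset (Fin N) // S.card = k}

abbrev W (N k : ℕ) := Sub N k → ℂ

lemma fcongr {k : ℕ} (f : W N k) {s t : Finset (Fin N)} (h : s = t)
    (h1 : s.card = k) (h2 : t.card = k) : f ⟨s, h1⟩ = f ⟨t, h2⟩ := by
  subst h; rfl

/-- Up operator. -/
noncomputable def Ufun (k : ℕ) (f : W N k) : W N (k + 1) := fun S =>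
  ∑ x ∈ S.1.attach, f ⟨S.1.erase x.1, by rw [Finset.card_erase_of_mem x.2, S.2]; rfl⟩

/-- Down operator. -/
noncomputable def Dfun (k : ℕ) (f : W N (k + 1)) : W N k := fun S =>
  ∑ x ∈ S.1ᶜ.attach, f ⟨insert x.1 S.1, by
    rw [Finset.card_insert_of_notMem (Finset.mem_compl.mp x.2), S.2]⟩

lemma Ufun_add (k : ℕ) (f g : W N k) : Ufun k (f + g) = Ufun k f + Ufun k g := by
  funext S; simp [Ufun, Finset.sum_add_distrib]

lemma Ufun_smul (k : ℕ) (c : ℂ) (f : W N k) : Ufun k (c • f) = c • Ufun k f := by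
  funext S; simp [Ufun, Finset.mul_sum]

lemma Dfun_add (k : ℕ) (f g : W N (k + 1)) : Dfun k (f + g) = Dfun k f + Dfun k g := by
  funext S; simp [Dfun, Finset.sum_add_distrib]

lemma Dfun_smul (k : ℕ) (c : ℂ) (f : W N (k + 1)) : Dfun k (c • f) = c • Dfun k f := by
  funext S; simp [Dfun, Finset.mul_sum]


/-- Extension of a level function to all finsets by zero. -/
noncomputable def ext (k : ℕ) (f : W N k) : Finset (Fin N) → ℂ := fun s =>
  if h : s.card = k then f ⟨s, h⟩ else 0

lemma ext_apply {k : ℕ} (f : W N k) {s : Finset (Fin N)} (h : s.card = k) :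
    ext k f s = f ⟨s, h⟩ := dif_pos h

lemma Ufun_eq {k : ℕ} (f : W N k) (S : Sub N (k + 1)) :
    Ufun k f S = ∑ x ∈ S.1, ext k f (S.1.erase x) := by
  rw [Ufun, ← Finset.sum_attach S.1 (fun x => ext k f (S.1.erase x))]
  exact Finset.sum_congr rfl fun x _ => (ext_apply f _).symm

lemma Dfun_eq {k : ℕ} (f : W N (k + 1)) (S : Sub N k) :
    Dfun k f S = ∑ x ∈ S.1ᶜ, ext (k + 1) f (insert x S.1) := by
  rw [Dfun, ← Finset.sum_attach S.1ᶜ (fun x => ext (k + 1) f (insert x S.1))]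
  exact Finset.sum_congr rfl fun x _ => (ext_apply f _).symm

lemma card_compl'' {k : ℕ} (S : Sub N k) : (S.1ᶜ).card = N - k := by
  rw [Finset.card_compl, S.2, Fintype.card_fin]

/-- The commutation relation `DU = UD + (N - 2k)` at level `k+1`, in additive form. -/
lemma DU_comm (k : ℕ) (f : W N (k + 1)) (S : Sub N (k + 1)) :
    Dfun (k + 1) (Ufun (k + 1) f) S + ((k + 1 : ℕ) : ℂ) * f S
      = Ufun k (Dfun k f) S + ((N - (k + 1) : ℕ) : ℂ) * f S := by
  have hL : Dfun (k + 1) (Ufun (k + 1) f) S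
      = ((N - (k + 1) : ℕ) : ℂ) * f S
        + ∑ x ∈ S.1ᶜ, ∑ y ∈ S.1, ext (k + 1) f ((insert x S.1).erase y) := by
    rw [Dfun_eq]
    have : ∀ x ∈ S.1ᶜ, ext (k + 2) (Ufun (k + 1) f) (insert x S.1)
        = f S + ∑ y ∈ S.1, ext (k + 1) f ((insert x S.1).erase y) := by
      intro x hx
      have hxS : x ∉ S.1 := Finset.mem_compl.mp hx
      have hc : (insert x S.1).card = k + 2 := by
        rw [Finset.card_insert_of_notMem hxS, S.2]
      rw [ext_apply _ hc, Ufun_eq, Finset.sum_insert hxS, Finset.erase_insert hxS,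
        ext_apply _ S.2]
    rw [Finset.sum_congr rfl this, Finset.sum_add_distrib, Finset.sum_const,
      card_compl'' S, nsmul_eq_mul]
  have hR : Ufun k (Dfun k f) S
      = ((k + 1 : ℕ) : ℂ) * f S
        + ∑ y ∈ S.1, ∑ x ∈ S.1ᶜ, ext (k + 1) f (insert x (S.1.erase y)) := by
    rw [Ufun_eq]
    have : ∀ y ∈ S.1, ext k (Dfun k f) (S.1.erase y)
        = f S + ∑ x ∈ S.1ᶜ, ext (k + 1) f (insert x (S.1.erase y)) := by
      intro y hy
      have hc : (S.1.erase y).card = k := by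
        rw [Finset.card_erase_of_mem hy, S.2]; rfl
      rw [ext_apply _ hc, Dfun_eq]
      simp only [Finset.compl_erase]
      rw [Finset.sum_insert (by simp [hy]), Finset.insert_erase hy, ext_apply _ S.2]
    rw [Finset.sum_congr rfl this, Finset.sum_add_distrib, Finset.sum_const, S.2,
      nsmul_eq_mul]
  rw [hL, hR, Finset.sum_comm]
  have : ∀ y ∈ S.1, ∀ x ∈ S.1ᶜ,
      ext (k + 1) f ((insert x S.1).erase y) = ext (k + 1) f (insert x (S.1.erase y)) := by
    intro y hy x hx
    rw [Finset.erase_insert_of_ne (by rintro rfl; exact Finset.mem_compl.mp hx hy)]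
  rw [Finset.sum_congr rfl fun y hy => Finset.sum_congr rfl (this y hy)]
  ring

/-- sum over level-k subtype equals sum over filtered finsets -/
lemma sumSub (k : ℕ) (H : Finset (Fin N) → ℂ) :
    (∑ S : Sub N k, H S.1) = ∑ s ∈ univ.filter (fun s : Finset (Fin N) => s.card = k), H s := by
  exact (Finset.sum_subtype (univ.filter (fun s : Finset (Fin N) => s.card = k))
    (by simp) H).symm

noncomputable def ip {k : ℕ} (f g : W N k) : ℂ := ∑ S : Sub N k, f S * (starRingEnd ℂ) (g S)

lemma adj (k : ℕ) (g : W N k) (f : W N (k + 1)) :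
    ip (Ufun k g) f = ip g (Dfun k f) := by
  have hL : ip (Ufun k g) f
      = ∑ p ∈ (univ : Finset (Finset (Fin N) × Fin N)).filter
          (fun p => p.1.card = k + 1 ∧ p.2 ∈ p.1),
          ext k g (p.1.erase p.2) * (starRingEnd ℂ) (ext (k + 1) f p.1) := by
    rw [ip]
    have : ∀ S : Sub N (k + 1), Ufun k g S * (starRingEnd ℂ) (f S)
        = ∑ y ∈ S.1, ext k g (S.1.erase y) * (starRingEnd ℂ) (ext (k + 1) f S.1) := by
      intro S
      rw [Ufun_eq, Finset.sum_mul, ext_apply f S.2]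
    rw [Finset.sum_congr rfl (fun S _ => this S),
      sumSub (k + 1) (fun s => ∑ y ∈ s, ext k g (s.erase y) * (starRingEnd ℂ) (ext (k + 1) f s))]
    exact (Finset.sum_finset_product' _ _ _ (fun p => by simp [and_comm])).symm
  have hR : ip g (Dfun k f)
      = ∑ p ∈ (univ : Finset (Finset (Fin N) × Fin N)).filter
          (fun p => p.1.card = k ∧ p.2 ∉ p.1),
          ext k g p.1 * (starRingEnd ℂ) (ext (k + 1) f (insert p.2 p.1)) := by
    rw [ip]
    have : ∀ S : Sub N k, g S * (starRingEnd ℂ) (Dfun k f S)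
        = ∑ x ∈ S.1ᶜ, ext k g S.1 * (starRingEnd ℂ) (ext (k + 1) f (insert x S.1)) := by
      intro S
      rw [Dfun_eq, map_sum, Finset.mul_sum, ext_apply g S.2]
    rw [Finset.sum_congr rfl (fun S _ => this S),
      sumSub k (fun s => ∑ x ∈ sᶜ, ext k g s * (starRingEnd ℂ) (ext (k + 1) f (insert x s)))]
    exact (Finset.sum_finset_product' _ _ _ (fun p => by simp [and_comm])).symm
  rw [hL, hR]
  refine Finset.sum_nbij' (fun p => (p.1.erase p.2, p.2)) (fun p => (insert p.2 p.1, p.2))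
    ?_ ?_ ?_ ?_ ?_
  · intro p hp
    simp only [Finset.mem_filter, Finset.mem_univ, true_and] at hp ⊢
    exact ⟨by rw [Finset.card_erase_of_mem hp.2, hp.1]; rfl, Finset.notMem_erase _ _⟩
  · intro p hp
    simp only [Finset.mem_filter, Finset.mem_univ, true_and] at hp ⊢
    exact ⟨by rw [Finset.card_insert_of_notMem hp.2, hp.1], Finset.mem_insert_self _ _⟩
  · intro p hp
    simp only [Finset.mem_filter, Finset.mem_univ, true_and] at hp
    simp [Finset.insert_erase hp.2]
  · intro p hp
    simp only [Finset.mem_filter, Finset.mem_univ, true_and] at hp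
    simp [Finset.erase_insert hp.2]
  · intro p hp
    simp only [Finset.mem_filter, Finset.mem_univ, true_and] at hp
    simp [Finset.insert_erase hp.2]

noncomputable def ipR {k : ℕ} (f : W N k) : ℝ := ∑ S : Sub N k, Complex.normSq (f S)

lemma ip_self {k : ℕ} (f : W N k) : ip f f = ((ipR f : ℝ) : ℂ) := by
  rw [ip, ipR]
  push_cast
  exact Finset.sum_congr rfl fun S _ => (Complex.mul_conj (f S))

lemma ipR_nonneg {k : ℕ} (f : W N k) : 0 ≤ ipR f :=
  Finset.sum_nonneg fun S _ => Complex.normSq_nonneg _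

lemma eq_zero_of_ipR {k : ℕ} (f : W N k) (h : ipR f = 0) : f = 0 := by
  funext S
  have := (Finset.sum_eq_zero_iff_of_nonneg
    (fun S _ => Complex.normSq_nonneg (f S))).mp h S (Finset.mem_univ S)
  exact Complex.normSq_eq_zero.mp this

lemma ip_zero_right {k : ℕ} (f : W N k) : ip f (0 : W N k) = 0 := by
  simp [ip]

lemma Dfun_zero (k : ℕ) : Dfun k (0 : W N (k + 1)) = 0 := by
  funext S; simp [Dfun]

/-- Injectivity of the up operator below the middle. -/
lemma Ufun_eq_zero {k : ℕ} (hk : 2 * k < N) (f : W N k) (hf : Ufun k f = 0) : f = 0 := by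
  cases k with
  | zero =>
    have hN : 0 < N := by omega
    have hT : ({(⟨0, hN⟩ : Fin N)} : Finset (Fin N)).card = 1 := Finset.card_singleton _
    have h0 : Ufun 0 f ⟨_, hT⟩ = f ⟨∅, Finset.card_empty⟩ := by
      rw [Ufun_eq, Finset.sum_singleton, Finset.erase_singleton, ext_apply]
    funext S
    have hS : S = ⟨∅, Finset.card_empty⟩ := Subtype.ext (Finset.card_eq_zero.mp S.2)
    rw [hS]
    rw [hf] at h0
    exact h0.symm
  | succ j =>
    -- use the commutation relation and positivity
    have key : ∀ S : Sub N (j + 1),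
        ((j + 1 : ℕ) : ℂ) * f S = Ufun j (Dfun j f) S + ((N - (j + 1) : ℕ) : ℂ) * f S := by
      intro S
      have := DU_comm j f S
      rw [hf, Dfun_zero] at this
      simpa using this
    have key2 : ((j + 1 : ℕ) : ℂ) * ip f f = ip (Dfun j f) (Dfun j f)
        + ((N - (j + 1) : ℕ) : ℂ) * ip f f := by
      have e1 : ∀ S : Sub N (j + 1),
          ((j + 1 : ℕ) : ℂ) * (f S * (starRingEnd ℂ) (f S))
            = Ufun j (Dfun j f) S * (starRingEnd ℂ) (f S)
              + ((N - (j + 1) : ℕ) : ℂ) * (f S * (starRingEnd ℂ) (f S)) := by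
        intro S
        calc ((j + 1 : ℕ) : ℂ) * (f S * (starRingEnd ℂ) (f S))
            = (((j + 1 : ℕ) : ℂ) * f S) * (starRingEnd ℂ) (f S) := by ring
          _ = (Ufun j (Dfun j f) S + ((N - (j + 1) : ℕ) : ℂ) * f S)
                * (starRingEnd ℂ) (f S) := by rw [key S]
          _ = Ufun j (Dfun j f) S * (starRingEnd ℂ) (f S)
              + ((N - (j + 1) : ℕ) : ℂ) * (f S * (starRingEnd ℂ) (f S)) := by ring
      rw [← adj j (Dfun j f) f, ip, ip, Finset.mul_sum, Finset.mul_sum,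
        ← Finset.sum_add_distrib]
      exact Finset.sum_congr rfl fun S _ => e1 S
    have hreal : ((j + 1 : ℕ) : ℝ) * ipR f
        = ipR (Dfun j f) + ((N - (j + 1) : ℕ) : ℝ) * ipR f := by
      have h := key2
      rw [ip_self f, ip_self (Dfun j f)] at h
      exact_mod_cast h
    have ha := ipR_nonneg (Dfun j f)
    have hb := ipR_nonneg f
    have hlt : ((j + 1 : ℕ) : ℝ) < ((N - (j + 1) : ℕ) : ℝ) := by
      have : j + 1 < N - (j + 1) := by omega
      exact_mod_cast this
    have hzero : ipR f = 0 := by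
      rcases eq_or_lt_of_le hb with hb' | hb'
      · exact hb'.symm
      · exfalso
        have hpos := mul_pos (sub_pos.mpr hlt) hb'
        have hexp : (((N - (j + 1) : ℕ) : ℝ) - ((j + 1 : ℕ) : ℝ)) * ipR f
            = ((N - (j + 1) : ℕ) : ℝ) * ipR f - ((j + 1 : ℕ) : ℝ) * ipR f := by ring
        rw [hexp] at hpos
        linarith
    exact eq_zero_of_ipR f hzero

/-- `D ∘ U` is injective below the middle. -/
lemma DU_inj {k : ℕ} (hk : 2 * k < N) (f : W N k) (hf : Dfun k (Ufun k f) = 0) : f = 0 := by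
  have h1 : ip (Ufun k f) (Ufun k f) = 0 := by
    rw [adj k f (Ufun k f), hf, ip_zero_right]
  have h2 : Ufun k f = 0 := by
    rw [ip_self] at h1
    exact eq_zero_of_ipR _ (by exact_mod_cast h1)
  exact Ufun_eq_zero hk f h2

/-- The odd-graph / complement-up operator. -/
noncomputable def Afun (k : ℕ) (f : W N k) : W N k := fun S =>
  ∑ y ∈ S.1ᶜ, ext k f (S.1ᶜ.erase y)

/-- `A² = D∘U` in the middle dimension. -/
lemma Afun_sq {k : ℕ} (hN : N = 2 * k + 1) (f : W N k) :
    Afun k (Afun k f) = Dfun k (Ufun k f) := by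
  funext S
  have hcS : (S.1ᶜ).card = k + 1 := by
    rw [Finset.card_compl, S.2, Fintype.card_fin, hN]; omega
  rw [Afun, Dfun_eq]
  have h1 : ∀ y ∈ S.1ᶜ, ext k (Afun k f) (S.1ᶜ.erase y)
      = ∑ z ∈ insert y S.1, ext k f ((insert y S.1).erase z) := by
    intro y hy
    have hce : (S.1ᶜ.erase y).card = k := by rw [Finset.card_erase_of_mem hy, hcS]; rfl
    rw [ext_apply _ hce, Afun]
    have hcc : (S.1ᶜ.erase y)ᶜ = insert y S.1 := by
      rw [Finset.compl_erase, compl_compl]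
    exact Finset.sum_congr (by rw [hcc]) (fun z _ => by rw [hcc])
  have h2 : ∀ y ∈ S.1ᶜ, ext (k + 1) (Ufun k f) (insert y S.1)
      = ∑ z ∈ insert y S.1, ext k f ((insert y S.1).erase z) := by
    intro y hy
    have hci : (insert y S.1).card = k + 1 := by
      rw [Finset.card_insert_of_notMem (Finset.mem_compl.mp hy), S.2]
    rw [ext_apply _ hci, Ufun_eq]
  rw [Finset.sum_congr rfl h1, ← Finset.sum_congr rfl h2]

section Harmonic

variable {k : ℕ} (f : W N (k + 1))

/-- Sum of `f` over sets containing `B` and disjoint from `C`. -/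
noncomputable def Gsum (B C : Finset (Fin N)) : ℂ :=
  ∑ T ∈ (univ : Finset (Sub N (k + 1))).filter (fun T => B ⊆ T.1 ∧ Disjoint T.1 C), f T

lemma Gsum_rec (B C : Finset (Fin N)) (c : Fin N) :
    Gsum f B C = Gsum f (insert c B) C + Gsum f B (insert c C) := by
  rw [Gsum, ← Finset.sum_filter_add_sum_filter_not
    ((univ : Finset (Sub N (k + 1))).filter (fun T => B ⊆ T.1 ∧ Disjoint T.1 C))
    (fun T => c ∈ T.1) f, Gsum, Gsum, Finset.filter_filter, Finset.filter_filter]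
  congr 1
  · apply Finset.sum_congr _ (fun _ _ => rfl)
    apply Finset.filter_congr
    intro T _
    constructor
    · rintro ⟨⟨h1, h2⟩, h3⟩; exact ⟨Finset.insert_subset h3 h1, h2⟩
    · rintro ⟨h1, h2⟩
      have hc := h1 (Finset.mem_insert_self c B)
      exact ⟨⟨(Finset.insert_subset_iff.mp h1).2, h2⟩, hc⟩
  · apply Finset.sum_congr _ (fun _ _ => rfl)
    apply Finset.filter_congr
    intro T _
    rw [Finset.disjoint_insert_right]
    constructor
    · rintro ⟨⟨h1, h2⟩, h3⟩; exact ⟨h1, h3, h2⟩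
    · rintro ⟨h1, h2, h3⟩; exact ⟨⟨h1, h3⟩, h2⟩

lemma Gsum_superset_eq {B : Finset (Fin N)} (hB : B.card = k) :
    Gsum f B ∅ = Dfun k f ⟨B, hB⟩ := by
  rw [Gsum, Dfun_eq]
  refine (Finset.sum_bij
    (fun (x : Fin N) (hx : x ∈ Bᶜ) =>
      (⟨insert x B, by rw [Finset.card_insert_of_notMem (Finset.mem_compl.mp hx), hB]⟩ :
        Sub N (k + 1)))
    ?_ ?_ ?_ ?_).symm
  · intro x hx
    simp only [Finset.mem_filter, Finset.mem_univ, true_and]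
    exact ⟨Finset.subset_insert x B, Finset.disjoint_empty_right _⟩
  · intro x hx y hy hxy
    have h := congrArg (fun T : Sub N (k + 1) => T.1) hxy
    simp only at h
    have : x ∈ insert y B := h ▸ Finset.mem_insert_self x B
    rcases Finset.mem_insert.mp this with h' | h'
    · exact h'
    · exact absurd h' (Finset.mem_compl.mp hx)
  · intro T hT
    simp only [Finset.mem_filter, Finset.mem_univ, true_and] at hT
    have hcd : (T.1 \ B).card = 1 := by
      rw [Finset.card_sdiff_of_subset hT.1, T.2, hB]
      omega
    obtain ⟨a, ha⟩ := Finset.card_eq_one.mp hcd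
    have haB : a ∈ Bᶜ := by
      have : a ∈ T.1 \ B := ha ▸ Finset.mem_singleton_self a
      exact Finset.mem_compl.mpr (Finset.mem_sdiff.mp this).2
    refine ⟨a, haB, ?_⟩
    apply Subtype.ext
    simp only
    rw [Finset.insert_eq, Finset.union_comm, ← ha, Finset.union_sdiff_of_subset hT.1]
  · intro x hx
    exact ext_apply f _

/-- Vanishing of sums over supersets, for harmonic `f`. -/
lemma Gsum_vanish (hD : Dfun k f = 0) :
    ∀ (d : ℕ) (B : Finset (Fin N)), B.card + d = k → Gsum f B ∅ = 0 := by
  intro d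
  induction d with
  | zero =>
    intro B hB
    rw [Gsum_superset_eq f (by omega : B.card = k), hD]
    rfl
  | succ d ih =>
    intro B hB
    have h0 : ∀ x ∈ Bᶜ, Gsum f (insert x B) ∅ = 0 := fun x hx =>
      ih (insert x B) (by rw [Finset.card_insert_of_notMem (Finset.mem_compl.mp hx)]; omega)
    have hsum : ∑ x ∈ Bᶜ, Gsum f (insert x B) ∅ = 0 :=
      Finset.sum_eq_zero h0
    have hswap : ∑ x ∈ Bᶜ, Gsum f (insert x B) ∅
        = ((d + 2 : ℕ) : ℂ) * Gsum f B ∅ := by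
      simp only [Gsum, Finset.sum_filter]
      rw [Finset.sum_comm]
      rw [Finset.mul_sum]
      refine Finset.sum_congr rfl fun T _ => ?_
      by_cases hBT : B ⊆ T.1 ∧ Disjoint T.1 ∅
      · have hcard : (Bᶜ.filter (fun x => insert x B ⊆ T.1 ∧ Disjoint T.1 ∅)).card = d + 2 := by
          have hfe : Bᶜ.filter (fun x => insert x B ⊆ T.1 ∧ Disjoint T.1 ∅) = T.1 \ B := by
            ext x
            simp only [Finset.mem_filter, Finset.mem_compl, Finset.mem_sdiff,
              Finset.insert_subset_iff, Finset.disjoint_empty_right, and_true]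
            constructor
            · rintro ⟨h1, h2, h3⟩; exact ⟨h2, h1⟩
            · rintro ⟨h1, h2⟩; exact ⟨h2, h1, hBT.1⟩
          rw [hfe, Finset.card_sdiff_of_subset hBT.1, T.2]
          omega
        rw [← Finset.sum_filter, Finset.sum_const, nsmul_eq_mul, hcard, if_pos hBT,
          ← hcard]
      · have hfe : Bᶜ.filter (fun x => insert x B ⊆ T.1 ∧ Disjoint T.1 ∅) = ∅ := by
          refine Finset.filter_eq_empty_iff.mpr fun x hx => ?_
          rintro ⟨h1, h2⟩
          exact hBT ⟨(Finset.insert_subset_iff.mp h1).2, h2⟩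
        have : ∀ x ∈ Bᶜ, (if insert x B ⊆ T.1 ∧ Disjoint T.1 ∅ then f T else 0) = 0 := by
          intro x hx
          rw [if_neg]
          intro hcon
          have : x ∈ Bᶜ.filter (fun x => insert x B ⊆ T.1 ∧ Disjoint T.1 ∅) :=
            Finset.mem_filter.mpr ⟨hx, hcon⟩
          rw [hfe] at this
          exact absurd this (Finset.notMem_empty x)
        rw [Finset.sum_congr rfl this, Finset.sum_const_zero, if_neg hBT, mul_zero]
    rw [hswap] at hsum
    have : ((d + 2 : ℕ) : ℂ) ≠ 0 := by exact_mod_cast (by omega : d + 2 ≠ 0)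
    exact (mul_eq_zero.mp hsum).resolve_left this

/-- The inclusion–exclusion identity for harmonic `f`. -/
lemma Gsum_harmonic (hD : Dfun k f = 0) :
    ∀ (C B : Finset (Fin N)), Disjoint B C → B.card + C.card ≤ k + 1 →
      Gsum f B C = (-1 : ℂ) ^ C.card * ext (k + 1) f (B ∪ C) := by
  intro C
  induction C using Finset.induction_on with
  | empty =>
    intro B _ hcard
    rcases Nat.lt_or_ge B.card (k + 1) with hlt | hge
    · rw [Gsum_vanish f hD (k - B.card) B (by omega)]
      rw [Finset.card_empty, pow_zero, one_mul, Finset.union_empty, ext,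
        dif_neg (by omega)]
    · have hBk : B.card = k + 1 := by simpa using le_antisymm hcard hge
      have hfilter : (univ : Finset (Sub N (k + 1))).filter
          (fun T => B ⊆ T.1 ∧ Disjoint T.1 ∅) = {⟨B, hBk⟩} := by
        ext T
        simp only [Finset.mem_filter, Finset.mem_univ, true_and, Finset.mem_singleton,
          Finset.disjoint_empty_right, and_true]
        constructor
        · intro h
          exact Subtype.ext (Finset.eq_of_subset_of_card_le h (by rw [T.2, hBk])).symm
        · rintro rfl; rfl
      rw [Gsum, hfilter, Finset.sum_singleton, Finset.card_empty, pow_zero, one_mul,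
        Finset.union_empty, ext_apply f hBk]
  | @insert c C' hc ih =>
    intro B hdisj hcard
    have hcB : c ∉ B := by
      intro h
      exact (Finset.disjoint_left.mp hdisj h) (Finset.mem_insert_self c C')
    have hdBC' : Disjoint B C' := by
      refine Finset.disjoint_left.mpr fun a ha hac => ?_
      exact (Finset.disjoint_left.mp hdisj ha) (Finset.mem_insert_of_mem hac)
    have hCcard : (insert c C').card = C'.card + 1 := Finset.card_insert_of_notMem hc
    have hrec := Gsum_rec f B C' c
    have h1 : Gsum f B C' = (-1 : ℂ) ^ C'.card * ext (k + 1) f (B ∪ C') :=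
      ih B hdBC' (by omega)
    have h2 : Gsum f (insert c B) C' = (-1 : ℂ) ^ C'.card * ext (k + 1) f (insert c B ∪ C') := by
      refine ih (insert c B) ?_ ?_
      · refine Finset.disjoint_left.mpr fun a ha hac => ?_
        rcases Finset.mem_insert.mp ha with rfl | ha'
        · exact hc hac
        · exact Finset.disjoint_left.mp hdBC' ha' hac
      · rw [Finset.card_insert_of_notMem hcB]; omega
    have hext0 : ext (k + 1) f (B ∪ C') = 0 := by
      rw [ext, dif_neg]
      rw [Finset.card_union_of_disjoint hdBC']
      omega
    have : Gsum f B (insert c C') = Gsum f B C' - Gsum f (insert c B) C' := by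
      rw [hrec]; ring
    rw [this, h1, h2, hext0, mul_zero, zero_sub, hCcard, pow_succ]
    have hset : insert c B ∪ C' = B ∪ insert c C' := by
      rw [Finset.insert_union, Finset.union_insert]
    rw [hset]
    ring

end Harmonic

/-- On harmonic functions in the middle dimension, `A` acts by `(-1)^(k+1)`. -/
lemma Afun_harmonic {k : ℕ} (hN : N = 2 * k + 3) (f : W N (k + 1))
    (hD : Dfun k f = 0) (S : Sub N (k + 1)) :
    Afun (k + 1) f S = (-1 : ℂ) ^ (k + 1) * f S := by
  have hcS : (S.1ᶜ).card = k + 2 := by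
    rw [Finset.card_compl, S.2, Fintype.card_fin, hN]; omega
  have hconv : Afun (k + 1) f S = Gsum f ∅ S.1 := by
    rw [Afun, Gsum]
    refine Finset.sum_bij
      (fun (y : Fin N) (hy : y ∈ S.1ᶜ) =>
        (⟨S.1ᶜ.erase y, by rw [Finset.card_erase_of_mem hy, hcS]; omega⟩ : Sub N (k + 1)))
      ?_ ?_ ?_ ?_
    · intro y hy
      simp only [Finset.mem_filter, Finset.mem_univ, true_and]
      refine ⟨Finset.empty_subset _, ?_⟩
      refine Finset.disjoint_left.mpr fun a ha has => ?_
      exact Finset.mem_compl.mp (Finset.mem_of_mem_erase ha) has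
    · intro y hy y' hy' h
      have h' := congrArg (fun T : Sub N (k + 1) => T.1) h
      simp only at h'
      by_contra hne
      have : y' ∈ S.1ᶜ.erase y := Finset.mem_erase.mpr ⟨fun hh => hne hh.symm, hy'⟩
      rw [h'] at this
      exact (Finset.notMem_erase y' _) this
    · intro T hT
      simp only [Finset.mem_filter, Finset.mem_univ, true_and] at hT
      have hsub : T.1 ⊆ S.1ᶜ := fun a ha =>
        Finset.mem_compl.mpr (Finset.disjoint_left.mp hT.2 ha)
      have hcd : (S.1ᶜ \ T.1).card = 1 := by
        rw [Finset.card_sdiff_of_subset hsub, hcS, T.2]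
        omega
      obtain ⟨a, ha⟩ := Finset.card_eq_one.mp hcd
      have haa : a ∈ S.1ᶜ \ T.1 := ha ▸ Finset.mem_singleton_self a
      refine ⟨a, (Finset.mem_sdiff.mp haa).1, ?_⟩
      apply Subtype.ext
      simp only
      ext x
      simp only [Finset.mem_erase]
      constructor
      · rintro ⟨hxa, hxc⟩
        by_contra hxT
        have : x ∈ S.1ᶜ \ T.1 := Finset.mem_sdiff.mpr ⟨hxc, hxT⟩
        rw [ha] at this
        exact hxa (Finset.mem_singleton.mp this)
      · intro hxT
        refine ⟨?_, hsub hxT⟩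
        rintro rfl
        exact (Finset.mem_sdiff.mp haa).2 hxT
    · intro y hy
      exact ext_apply f _
  rw [hconv, Gsum_harmonic f hD S.1 ∅ (Finset.disjoint_left.mpr fun a ha => absurd ha
    (Finset.notMem_empty a)) (by simp [S.2])]
  rw [S.2, Finset.empty_union, ext_apply f S.2]




lemma invCount_append {α : Type*} [LinearOrder α] (l : List α) (a : α)
    (hl : List.Pairwise (· < ·) l) :
    invCount (l ++ [a])
      = ((univ : Finset (Fin l.length)).filter (fun i => a < l.get i)).card := by
  unfold invCount
  have hlen : (l ++ [a]).length = l.length + 1 := by simp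
  have hp2eq : ∀ p : Fin (l ++ [a]).length × Fin (l ++ [a]).length,
      p.1 < p.2 → (l ++ [a]).get p.2 < (l ++ [a]).get p.1 → (p.2 : ℕ) = l.length := by
    intro p h12 hget
    by_contra hne
    have h2 : (p.2 : ℕ) < l.length := by
      have := p.2.2; omega
    have h1 : (p.1 : ℕ) < l.length := lt_trans h12 h2
    have e1 : (l ++ [a]).get p.1 = l.get ⟨p.1, h1⟩ := by
      simp [List.get_eq_getElem, List.getElem_append_left h1]
    have e2 : (l ++ [a]).get p.2 = l.get ⟨p.2, h2⟩ := by
      simp [List.get_eq_getElem, List.getElem_append_left h2]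
    have := List.pairwise_iff_get.mp hl ⟨p.1, h1⟩ ⟨p.2, h2⟩ (by exact h12)
    rw [e1, e2] at hget
    exact absurd hget (asymm this)
  refine Finset.card_bij' (fun p hp => ⟨(p.1 : ℕ), ?_⟩)
    (fun i hi => (⟨(i : ℕ), by omega⟩, ⟨l.length, by omega⟩)) ?_ ?_ ?_ ?_
  · have hp := Finset.mem_filter.mp hp
    have := hp2eq p hp.2.1 hp.2.2
    have := hp.2.1
    omega
  · intro p hp
    have hp' := Finset.mem_filter.mp hp
    have h2 := hp2eq p hp'.2.1 hp'.2.2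
    have h1 : (p.1 : ℕ) < l.length := by have := hp'.2.1; omega
    simp only [Finset.mem_filter, Finset.mem_univ, true_and]
    have e1 : (l ++ [a]).get p.1 = l.get ⟨p.1, h1⟩ := by
      simp [List.get_eq_getElem, List.getElem_append_left h1]
    have e2 : (l ++ [a]).get p.2 = a := by
      have h3 : (p.2 : ℕ) = l.length := h2
      simp [List.get_eq_getElem, List.getElem_append_right, h3]
    have := hp'.2.2
    rw [e1, e2] at this
    exact this
  · intro i hi
    have hi' := Finset.mem_filter.mp hi
    simp only [Finset.mem_filter, Finset.mem_univ, true_and]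
    constructor
    · exact Fin.mk_lt_mk.mpr i.2
    · have e1 : (l ++ [a]).get ⟨(i : ℕ), by omega⟩ = l.get i := by
        simp [List.get_eq_getElem, List.getElem_append_left i.2]
      have e2 : (l ++ [a]).get ⟨l.length, by omega⟩ = a := by
        simp only [List.get_eq_getElem]
        exact List.getElem_concat_length (i := l.length) rfl (by omega)
      rw [e1, e2]
      exact hi'.2
  · intro p hp
    have hp' := Finset.mem_filter.mp hp
    have h2 := hp2eq p hp'.2.1 hp'.2.2
    ext <;> simp [h2.symm]
  · intro i hi
    rfl

lemma invSign_sort_append {N : ℕ} (s : Finset (Fin N)) (a : Fin N) :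
    invSign (s.sort (· ≤ ·) ++ [a]) = (-1 : ℂ) ^ (s.filter (fun y => a < y)).card := by
  rw [invSign, invCount_append _ _ (s.sortedLT_sort).pairwise]
  congr 1
  refine Finset.card_bij (fun i _ => (s.sort (· ≤ ·)).get i) ?_ ?_ ?_
  · intro i hi
    have hi' := Finset.mem_filter.mp hi
    refine Finset.mem_filter.mpr ⟨?_, hi'.2⟩
    exact (Finset.mem_sort _).mp (List.get_mem _ _)
  · intro i hi j hj hij
    exact (List.Nodup.get_inj_iff (s.sort_nodup (· ≤ ·))).mp hij
  · intro y hy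
    have hy' := Finset.mem_filter.mp hy
    have hmem : y ∈ s.sort (· ≤ ·) := (Finset.mem_sort _).mpr hy'.1
    obtain ⟨i, hi⟩ := List.mem_iff_get.mp hmem
    exact ⟨i, Finset.mem_filter.mpr ⟨Finset.mem_univ i, by rw [hi]; exact hy'.2⟩, hi⟩

lemma filter_lt_orderEmb {N n : ℕ} (T : Finset (Fin N)) (hT : T.card = n) (i : Fin n) :
    (T.filter (fun y => T.orderEmbOfFin hT i < y)).card = n - 1 - (i : ℕ) := by
  have : (T.filter (fun y => T.orderEmbOfFin hT i < y)).card = (Finset.Ioi i).card := by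
    refine (Finset.card_bij (fun j _ => T.orderEmbOfFin hT j) ?_ ?_ ?_).symm
    · intro j hj
      refine Finset.mem_filter.mpr ⟨Finset.orderEmbOfFin_mem T hT j, ?_⟩
      exact (OrderEmbedding.lt_iff_lt _).mpr (Finset.mem_Ioi.mp hj)
    · intro j _ j' _ h
      exact (T.orderEmbOfFin hT).injective h
    · intro y hy
      have hy' := Finset.mem_filter.mp hy
      set j := (T.orderIsoOfFin hT).symm ⟨y, hy'.1⟩ with hj
      have hyj : T.orderEmbOfFin hT j = y := by
        have := (T.orderIsoOfFin hT).apply_symm_apply ⟨y, hy'.1⟩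
        rw [← Finset.coe_orderIsoOfFin_apply, this]
      refine ⟨j, Finset.mem_Ioi.mpr ?_, hyj⟩
      have := hy'.2
      rw [← hyj] at this
      exact (OrderEmbedding.lt_iff_lt _).mp this
  rw [this, Fin.card_Ioi]

lemma filter_lt_univ_card {N : ℕ} (x : Fin N) :
    ((univ : Finset (Fin N)).filter (fun y => x < y)).card = N - 1 - (x : ℕ) := by
  have : (univ : Finset (Fin N)).filter (fun y => x < y) = Finset.Ioi x := by
    ext y; simp
  rw [this, Fin.card_Ioi]

lemma filter_lt_split {N : ℕ} (T : Finset (Fin N)) (x : Fin N) :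
    (T.filter (fun y => x < y)).card + (Tᶜ.filter (fun y => x < y)).card
      = N - 1 - (x : ℕ) := by
  rw [← filter_lt_univ_card x, ← Finset.card_union_of_disjoint
    (Finset.disjoint_filter_filter disjoint_compl_right),
    ← Finset.filter_union, Finset.union_compl]


end CatAux


-- ===== connection to φ and the main dimension computation =====
namespace CatAux

section Main

variable (k : ℕ)

local notation "NN" => (k + 2) + (k + 1)

lemma hNN : NN = 2 * k + 3 := by omega

/-- parity helper -/
lemma npow_parity (a b : ℕ) (h : a % 2 = b % 2) : (-1 : ℂ) ^ a = (-1) ^ b := by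
  rcases Nat.even_or_odd a with ha | ha
  · have hb : Even b := by
      rw [Nat.even_iff]; rw [Nat.even_iff] at ha; omega
    rw [ha.neg_one_pow, hb.neg_one_pow]
  · have hb : Odd b := by
      rw [Nat.odd_iff]; rw [Nat.odd_iff] at ha; omega
    rw [ha.neg_one_pow, hb.neg_one_pow]

lemma coef_eq (T : Col (k + 2) (k + 1)) (i : Fin (k + 2)) :
    (-1 : ℂ) ^ (k + 2 - 1 - (i : ℕ))
        * invSign ((T.1ᶜ).sort (· ≤ ·) ++ [T.1.orderEmbOfFin T.2 i])
      = (-1) ^ ((T.1.orderEmbOfFin T.2 i : Fin NN) : ℕ) := by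
  rw [invSign_sort_append, ← pow_add]
  apply npow_parity
  have h1 := filter_lt_orderEmb T.1 T.2 i
  have h2 := filter_lt_split T.1 (T.1.orderEmbOfFin T.2 i)
  have hx : ((T.1.orderEmbOfFin T.2 i : Fin NN) : ℕ) < NN := (T.1.orderEmbOfFin T.2 i).2
  have hi : (i : ℕ) < k + 2 := i.2
  omega

lemma sum_orderEmb {n : ℕ} (T : Finset (Fin NN)) (hT : T.card = n) (g : Fin NN → ℂ) :
    ∑ i : Fin n, g (T.orderEmbOfFin hT i) = ∑ x ∈ T, g x := by
  refine Finset.sum_bij (fun i _ => T.orderEmbOfFin hT i)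
    (fun i _ => Finset.orderEmbOfFin_mem T hT i)
    (fun i _ j _ h => (T.orderEmbOfFin hT).injective h) ?_ (fun i _ => rfl)
  · intro y hy
    set j := (T.orderIsoOfFin hT).symm ⟨y, hy⟩ with hj
    have hyj : T.orderEmbOfFin hT j = y := by
      have := (T.orderIsoOfFin hT).apply_symm_apply ⟨y, hy⟩
      rw [← Finset.coe_orderIsoOfFin_apply, this]
    exact ⟨j, Finset.mem_univ j, hyj⟩

/-- The pointwise formula for `φ`. -/
lemma phiFun_apply (f : Mt (k + 2) (k + 1)) (U : Col (k + 2) (k + 1)) :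
    phiFun rfl f U
      = f U - ∑ x ∈ U.1, (-1 : ℂ) ^ (x : ℕ) * ext (k + 2) f ((U.1.erase x)ᶜ) := by
  have hUc : U.1.card = k + 2 := U.2
  rw [phiFun, Finset.sum_apply]
  have hterm : ∀ T : Col (k + 2) (k + 1),
      (f T • phiBasis rfl T) U
        = (if U = T then f T else 0)
          - ∑ i : Fin (k + 2),
              (if U.1 = insert (T.1.orderEmbOfFin T.2 i) T.1ᶜ then
                (-1 : ℂ) ^ ((T.1.orderEmbOfFin T.2 i : Fin NN) : ℕ) * f T else 0) := by
    intro T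
    simp only [phiBasis, Pi.smul_apply, Pi.sub_apply, Finset.sum_apply, smul_eq_mul]
    rw [mul_sub, Finset.mul_sum]
    congr 1
    · rw [delta]
      split_ifs <;> ring
    · refine Finset.sum_congr rfl fun i _ => ?_
      rw [delta]
      have hc := coef_eq k T i
      have hsub : (U = (⟨insert (T.1.orderEmbOfFin T.2 i) T.1ᶜ, by
          rw [Finset.card_insert_of_notMem (by
              simpa using Finset.orderEmbOfFin_mem T.1 T.2 i),
            card_compl']⟩ : Col (k + 2) (k + 1)))
          ↔ U.1 = insert (T.1.orderEmbOfFin T.2 i) T.1ᶜ := Subtype.ext_iff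
      split_ifs with h1 h2 h2
      · rw [mul_one, ← hc, mul_comm]
      · exact absurd (hsub.mp h1) h2
      · exact absurd (hsub.mpr h2) h1
      · ring
  rw [Finset.sum_congr rfl fun T _ => hterm T, Finset.sum_sub_distrib]
  congr 1
  · rw [Finset.sum_ite_eq univ U (fun T => f T), if_pos (Finset.mem_univ U)]
  · -- reindex the inner sum over the elements of T, then collapse
    have hre : ∀ T : Col (k + 2) (k + 1),
        (∑ i : Fin (k + 2),
          (if U.1 = insert (T.1.orderEmbOfFin T.2 i) T.1ᶜ then
            (-1 : ℂ) ^ ((T.1.orderEmbOfFin T.2 i : Fin NN) : ℕ) * f T else 0))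
        = ∑ x ∈ T.1, (if U.1 = insert x T.1ᶜ then (-1 : ℂ) ^ (x : ℕ) * f T else 0) :=
      fun T => sum_orderEmb k T.1 T.2
        (fun x => if U.1 = insert x T.1ᶜ then (-1 : ℂ) ^ (x : ℕ) * f T else 0)
    rw [Finset.sum_congr rfl fun T _ => hre T]
    -- extend inner sums to `univ` and swap
    have hext : ∀ T : Col (k + 2) (k + 1),
        (∑ x ∈ T.1, (if U.1 = insert x T.1ᶜ then (-1 : ℂ) ^ (x : ℕ) * f T else 0))
        = ∑ x : Fin NN, (if x ∈ T.1 then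
            (if U.1 = insert x T.1ᶜ then (-1 : ℂ) ^ (x : ℕ) * f T else 0) else 0) := by
      intro T
      rw [Finset.sum_ite_mem, Finset.univ_inter]
    have hA : (∑ T : Col (k + 2) (k + 1),
          ∑ x ∈ T.1, (if U.1 = insert x T.1ᶜ then (-1 : ℂ) ^ (x : ℕ) * f T else 0))
        = ∑ T : Col (k + 2) (k + 1), ∑ x : Fin NN, (if x ∈ T.1 then
            (if U.1 = insert x T.1ᶜ then (-1 : ℂ) ^ (x : ℕ) * f T else 0) else 0) :=
      Finset.sum_congr rfl fun T _ => hext T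
    rw [hA, Finset.sum_comm]
    have hRHS : (∑ x ∈ U.1, (-1 : ℂ) ^ (x : ℕ) * ext (k + 2) f ((U.1.erase x)ᶜ))
        = ∑ x : Fin NN, (if x ∈ U.1 then
            (-1 : ℂ) ^ (x : ℕ) * ext (k + 2) f ((U.1.erase x)ᶜ) else 0) := by
      rw [Finset.sum_ite_mem, Finset.univ_inter]
    rw [hRHS]
    refine Finset.sum_congr rfl fun x _ => ?_
    by_cases hx : x ∈ U.1
    · rw [if_pos hx]
      have hT0c : ((U.1.erase x)ᶜ).card = k + 2 := by
        rw [Finset.card_compl, Finset.card_erase_of_mem hx, hUc, Fintype.card_fin]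
        omega
      set T0 : Col (k + 2) (k + 1) := ⟨(U.1.erase x)ᶜ, hT0c⟩ with hT0
      rw [Finset.sum_eq_single T0]
      · have hxT0 : x ∈ T0.1 := by
          rw [hT0]
          exact Finset.mem_compl.mpr (Finset.notMem_erase x U.1)
        have hU : U.1 = insert x T0.1ᶜ := by
          rw [hT0]
          simp only [compl_compl]
          rw [Finset.insert_erase hx]
        rw [if_pos hxT0, if_pos hU, ext_apply f hT0c]
      · intro T _ hTne
        split_ifs with h1 h2
        · exfalso
          apply hTne
          apply Subtype.ext
          have : U.1.erase x = T.1ᶜ := by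
            rw [h2, Finset.erase_insert (fun hmem => (Finset.mem_compl.mp hmem) h1)]
          rw [hT0]
          simp only
          rw [this, compl_compl]
        · rfl
        · rfl
      · intro h; exact absurd (Finset.mem_univ T0) h
    · rw [if_neg hx]
      refine (Finset.sum_eq_zero fun T _ => ?_)
      split_ifs with h1 h2
      · exfalso
        apply hx
        rw [h2]
        exact Finset.mem_insert_self x _
      · rfl
      · rfl

/-- sum of the values of a subset of `Fin NN`. -/
def tau (s : Finset (Fin NN)) : ℕ := ∑ x ∈ s, (x : ℕ)

lemma tau_erase {s : Finset (Fin NN)} {y : Fin NN} (hy : y ∈ s) :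
    tau k s = tau k (s.erase y) + (y : ℕ) := by
  rw [tau, tau, Finset.sum_erase_add s _ hy]

lemma tau_compl (s : Finset (Fin NN)) :
    ((tau k s + tau k sᶜ)) % 2 = (k + 1) % 2 := by
  have huniv : tau k s + tau k sᶜ = ∑ x : Fin NN, (x : ℕ) := by
    rw [tau, tau, Finset.sum_add_sum_compl]
  have hval : ∑ x : Fin NN, (x : ℕ) = ∑ i ∈ Finset.range NN, i :=
    Fin.sum_univ_eq_sum_range (fun i => i) _
  have hg : ∑ i ∈ Finset.range NN, i = NN * (NN - 1) / 2 := by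
    rw [Finset.sum_range_id]
  have hdd : NN * (NN - 1) / 2 = (2 * k + 3) * (k + 1) := by
    have h4 : NN * (NN - 1) = ((2 * k + 3) * (k + 1)) * 2 := by
      have h3 : NN = 2 * k + 3 := by omega
      rw [h3]
      have h5 : 2 * k + 3 - 1 = 2 * k + 2 := by omega
      rw [h5]
      ring
    rw [h4, Nat.mul_div_cancel _ (by norm_num : 0 < 2)]
  have h1 : (2 * k + 3) % 2 = 1 := by omega
  rw [huniv, hval, hg, hdd, Nat.mul_mod, h1, one_mul]
  omega

lemma card_compl_n (S : Sub NN (k + 1)) : (S.1ᶜ).card = k + 2 := by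
  rw [Finset.card_compl, S.2, Fintype.card_fin]
  omega

lemma card_compl_m (U : Col (k + 2) (k + 1)) : (U.1ᶜ).card = k + 1 := by
  rw [Finset.card_compl, U.2, Fintype.card_fin]
  omega

/-- Change of basis `v_T ↦ (-1)^{τ(T)} v_{Tᶜ}`. -/
noncomputable def Efun (f : Mt (k + 2) (k + 1)) : W NN (k + 1) := fun S =>
  (-1 : ℂ) ^ tau k S.1 * f ⟨S.1ᶜ, card_compl_n k S⟩

noncomputable def Efun' (g : W NN (k + 1)) : Mt (k + 2) (k + 1) := fun U =>
  (-1 : ℂ) ^ tau k U.1ᶜ * g ⟨U.1ᶜ, card_compl_m k U⟩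

noncomputable def Elin : Mt (k + 2) (k + 1) →ₗ[ℂ] W NN (k + 1) where
  toFun := Efun k
  map_add' f g := by funext S; simp [Efun]; ring
  map_smul' c f := by funext S; simp [Efun]; ring

noncomputable def Elin' : W NN (k + 1) →ₗ[ℂ] Mt (k + 2) (k + 1) where
  toFun := Efun' k
  map_add' f g := by funext U; simp [Efun']; ring
  map_smul' c f := by funext U; simp [Efun']; ring

lemma neg_one_pow_sq (a : ℕ) : (-1 : ℂ) ^ a * (-1) ^ a = 1 := by
  rw [← pow_add]
  exact Even.neg_one_pow ⟨a, rfl⟩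

noncomputable def Eequiv : Mt (k + 2) (k + 1) ≃ₗ[ℂ] W NN (k + 1) := by
  refine LinearEquiv.ofLinear (Elin k) (Elin' k) ?_ ?_
  · apply LinearMap.ext
    intro g
    funext S
    show Efun k (Efun' k g) S = g S
    rw [Efun, Efun']
    have h1 : ((⟨S.1ᶜ, card_compl_n k S⟩ : Col (k + 2) (k + 1))).1ᶜ = S.1 := compl_compl _
    rw [fcongr g h1 _ S.2, Subtype.coe_eta]
    rw [show tau k ((⟨S.1ᶜ, card_compl_n k S⟩ : Col (k + 2) (k + 1))).1ᶜ = tau k S.1 by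
      rw [h1]]
    rw [← mul_assoc, neg_one_pow_sq, one_mul]
  · apply LinearMap.ext
    intro f
    funext U
    show Efun' k (Efun k f) U = f U
    rw [Efun', Efun]
    have h1 : ((⟨U.1ᶜ, card_compl_m k U⟩ : Sub NN (k + 1))).1ᶜ = U.1 := compl_compl _
    rw [fcongr f h1 _ U.2, Subtype.coe_eta]
    rw [show tau k ((⟨U.1ᶜ, card_compl_m k U⟩ : Sub NN (k + 1))).1 = tau k U.1ᶜ from rfl]
    rw [← mul_assoc, neg_one_pow_sq, one_mul]

lemma ext_add {j : ℕ} (f g : W NN j) (s : Finset (Fin NN)) :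
    ext j (f + g) s = ext j f s + ext j g s := by
  unfold ext
  split_ifs <;> simp

lemma ext_smul {j : ℕ} (c : ℂ) (f : W NN j) (s : Finset (Fin NN)) :
    ext j (c • f) s = c * ext j f s := by
  unfold ext
  split_ifs <;> simp

noncomputable def Alin : W NN (k + 1) →ₗ[ℂ] W NN (k + 1) where
  toFun := Afun (k + 1)
  map_add' f g := by
    funext S
    simp only [Afun, Pi.add_apply]
    rw [← Finset.sum_add_distrib]
    exact Finset.sum_congr rfl fun y _ => ext_add k f g _
  map_smul' c f := by
    funext S
    simp only [Afun, Pi.smul_apply, RingHom.id_apply, smul_eq_mul, Finset.mul_sum]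
    exact Finset.sum_congr rfl fun y _ => ext_smul k c f _

noncomputable def eigLin : W NN (k + 1) →ₗ[ℂ] W NN (k + 1) :=
  Alin k - ((-1 : ℂ) ^ (k + 1)) • LinearMap.id

noncomputable def Dlin : W NN (k + 1) →ₗ[ℂ] W NN k where
  toFun := Dfun k
  map_add' := Dfun_add k
  map_smul' := Dfun_smul k

noncomputable def Ulin : W NN k →ₗ[ℂ] W NN (k + 1) where
  toFun := Ufun k
  map_add' := Ufun_add k
  map_smul' := Ufun_smul k

lemma neg_one_pow_erase {s : Finset (Fin NN)} {y : Fin NN} (hy : y ∈ s) :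
    (-1 : ℂ) ^ (tau k (s.erase y)) = (-1) ^ (tau k s) * (-1) ^ (y : ℕ) := by
  have h := tau_erase k hy
  rw [h, pow_add, mul_assoc, neg_one_pow_sq, mul_one]

/-- The key intertwining identity. -/
lemma key_identity (f : Mt (k + 2) (k + 1)) (S : Sub NN (k + 1)) :
    Afun (k + 1) (Efun k f) S - (-1 : ℂ) ^ (k + 1) * Efun k f S
      = -((-1 : ℂ) ^ (tau k S.1ᶜ)
          * phiFun rfl f ⟨S.1ᶜ, card_compl_n k S⟩) := by
  set U0 : Col (k + 2) (k + 1) := ⟨S.1ᶜ, card_compl_n k S⟩ with hU0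
  have hAE : Afun (k + 1) (Efun k f) S
      = (-1 : ℂ) ^ (tau k S.1ᶜ)
        * ∑ y ∈ S.1ᶜ, (-1 : ℂ) ^ (y : ℕ) * ext (k + 2) f ((S.1ᶜ.erase y)ᶜ) := by
    rw [Afun, Finset.mul_sum]
    refine Finset.sum_congr rfl fun y hy => ?_
    have hce : (S.1ᶜ.erase y).card = k + 1 := by
      rw [Finset.card_erase_of_mem hy, card_compl_n k S]
      omega
    rw [ext_apply _ hce]
    show Efun k f ⟨S.1ᶜ.erase y, hce⟩ = _
    rw [Efun]
    have hval : f ⟨((⟨S.1ᶜ.erase y, hce⟩ : Sub NN (k + 1))).1ᶜ,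
          card_compl_n k ⟨S.1ᶜ.erase y, hce⟩⟩
        = ext (k + 2) f ((S.1ᶜ.erase y)ᶜ) :=
      (ext_apply f (card_compl_n k ⟨S.1ᶜ.erase y, hce⟩)).symm
    rw [hval]
    rw [show tau k ((⟨S.1ᶜ.erase y, hce⟩ : Sub NN (k + 1))).1 = tau k (S.1ᶜ.erase y) from rfl]
    rw [neg_one_pow_erase k hy]
    ring
  have hphi : ∑ y ∈ S.1ᶜ, (-1 : ℂ) ^ (y : ℕ) * ext (k + 2) f ((S.1ᶜ.erase y)ᶜ)
      = f U0 - phiFun rfl f U0 := by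
    have := phiFun_apply k f U0
    rw [this]
    ring
  have heps : (-1 : ℂ) ^ (k + 1) * Efun k f S = (-1 : ℂ) ^ (tau k S.1ᶜ) * f U0 := by
    rw [Efun, ← mul_assoc, ← pow_add]
    congr 1
    apply npow_parity
    have := tau_compl k S.1
    omega
  rw [hAE, hphi, heps]
  ring

lemma ker_phi_eq_ker_comp :
    LinearMap.ker (phiLin (k + 2) (k + 1) rfl)
      = LinearMap.ker ((eigLin k) ∘ₗ (Eequiv k).toLinearMap) := by
  ext f
  rw [LinearMap.mem_ker, LinearMap.mem_ker]
  have happ : ∀ S : Sub NN (k + 1),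
      ((eigLin k) ∘ₗ (Eequiv k).toLinearMap) f S
        = -((-1 : ℂ) ^ (tau k S.1ᶜ) * phiFun rfl f ⟨S.1ᶜ, card_compl_n k S⟩) := by
    intro S
    have : ((eigLin k) ∘ₗ (Eequiv k).toLinearMap) f S
        = Afun (k + 1) (Efun k f) S - (-1 : ℂ) ^ (k + 1) * Efun k f S := by
      simp only [eigLin, LinearMap.comp_apply, LinearMap.sub_apply, LinearMap.smul_apply,
        LinearMap.id_apply, Pi.sub_apply, Pi.smul_apply, smul_eq_mul]
      rfl
    rw [this, key_identity]
  constructor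
  · intro h
    funext S
    rw [happ S]
    have : phiFun rfl f ⟨S.1ᶜ, card_compl_n k S⟩ = 0 := by
      show phiLin (k + 2) (k + 1) rfl f ⟨S.1ᶜ, card_compl_n k S⟩ = 0
      rw [h]
      rfl
    rw [this]
    simp
  · intro h
    funext U
    show phiFun rfl f U = 0
    have hS : ((⟨U.1ᶜ, card_compl_m k U⟩ : Sub NN (k + 1))).1ᶜ = U.1 := compl_compl _
    have h2 := happ ⟨U.1ᶜ, card_compl_m k U⟩
    rw [h] at h2
    have h3 : (0 : ℂ) = -((-1 : ℂ) ^ (tau k ((⟨U.1ᶜ, card_compl_m k U⟩ : Sub NN (k + 1))).1ᶜ)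
        * phiFun rfl f ⟨((⟨U.1ᶜ, card_compl_m k U⟩ : Sub NN (k + 1))).1ᶜ,
            card_compl_n k ⟨U.1ᶜ, card_compl_m k U⟩⟩) := h2
    have h4 : phiFun rfl f ⟨((⟨U.1ᶜ, card_compl_m k U⟩ : Sub NN (k + 1))).1ᶜ,
        card_compl_n k ⟨U.1ᶜ, card_compl_m k U⟩⟩ = phiFun rfl f U := by
      exact fcongr (phiFun rfl f) hS _ U.2
    rw [h4] at h3
    have h5 : (-1 : ℂ) ^ (tau k ((⟨U.1ᶜ, card_compl_m k U⟩ : Sub NN (k + 1))).1ᶜ) ≠ 0 :=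
      pow_ne_zero _ (by norm_num)
    have := h3.symm
    rw [neg_eq_zero] at this
    exact (mul_eq_zero.mp this).resolve_left h5

lemma ker_eig_eq_ker_D : LinearMap.ker (eigLin k) = LinearMap.ker (Dlin k) := by
  ext f
  rw [LinearMap.mem_ker, LinearMap.mem_ker]
  constructor
  · intro h
    have hAf : Afun (k + 1) f = ((-1 : ℂ) ^ (k + 1)) • f := by
      have : Alin k f - ((-1 : ℂ) ^ (k + 1)) • f = 0 := by
        have := h
        simp only [eigLin, LinearMap.sub_apply, LinearMap.smul_apply, LinearMap.id_apply]
          at this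
        exact this
      have h2 := sub_eq_zero.mp this
      exact h2
    have hAA : Afun (k + 1) (Afun (k + 1) f) = f := by
      rw [hAf, show Afun (k + 1) (((-1 : ℂ) ^ (k + 1)) • f) = Alin k (((-1 : ℂ) ^ (k + 1)) • f)
          from rfl,
        map_smul, show Alin k f = Afun (k + 1) f from rfl, hAf, smul_smul, neg_one_pow_sq,
        one_smul]
    rw [Afun_sq (by omega : NN = 2 * (k + 1) + 1) f] at hAA
    have hUD : Ufun k (Dfun k f) = 0 := by
      funext S
      have hcomm := DU_comm k f S
      rw [hAA] at hcomm
      have hNk : (NN - (k + 1) : ℕ) = k + 2 := by omega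
      rw [hNk] at hcomm
      have : f S + ((k + 1 : ℕ) : ℂ) * f S = Ufun k (Dfun k f) S + ((k + 2 : ℕ) : ℂ) * f S :=
        hcomm
      have hfin : Ufun k (Dfun k f) S = 0 := by
        push_cast at this ⊢
        linear_combination (-1 : ℂ) * this
      exact hfin
    exact Ufun_eq_zero (by omega : 2 * k < NN) (Dfun k f) hUD
  · intro h
    funext S
    have := Afun_harmonic (by omega : NN = 2 * k + 3) f h S
    simp only [eigLin, LinearMap.sub_apply, LinearMap.smul_apply, LinearMap.id_apply,
      Pi.sub_apply, Pi.smul_apply, smul_eq_mul, Pi.zero_apply]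
    rw [show Alin k f S = Afun (k + 1) f S from rfl, this]
    ring

lemma Dlin_surjective : Function.Surjective (Dlin k) := by
  have hinj : Function.Injective ((Dlin k) ∘ₗ (Ulin k)) := by
    rw [← LinearMap.ker_eq_bot]
    rw [LinearMap.ker_eq_bot']
    intro f hf
    exact DU_inj (by omega : 2 * k < NN) f hf
  have hsurj : Function.Surjective ((Dlin k) ∘ₗ (Ulin k)) :=
    (LinearMap.injective_iff_surjective).mp hinj
  intro g
  obtain ⟨f, hf⟩ := hsurj g
  exact ⟨Ulin k f, hf⟩

lemma finrank_W (j : ℕ) : Module.finrank ℂ (W NN j) = Nat.choose (NN) j := by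
  rw [Module.finrank_pi]
  rw [Fintype.card_finset_len]
  rw [Fintype.card_fin]

lemma finrank_ker_D :
    Module.finrank ℂ (LinearMap.ker (Dlin k)) + Nat.choose (NN) k = Nat.choose (NN) (k + 1) := by
  have h := LinearMap.finrank_range_add_finrank_ker (Dlin k)
  rw [LinearMap.range_eq_top.mpr (Dlin_surjective k), finrank_top] at h
  rw [finrank_W, finrank_W] at h
  omega

lemma cat_arith : catalan (k + 2) + (2 * k + 3).choose k = (2 * k + 3).choose (k + 1) := by
  have f1 := Nat.choose_succ_right_eq (2 * k + 3) k
  have h5 : 2 * k + 3 - k = k + 3 := by omega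
  rw [h5] at f1
  have f2 : (k + 3) * catalan (k + 2) = Nat.centralBinom (k + 2) :=
    succ_mul_catalan_eq_centralBinom (k + 2)
  have f2' : Nat.centralBinom (k + 2) = (2 * (k + 2)).choose (k + 2) :=
    Nat.centralBinom_eq_two_mul_choose _
  have f3 : (2 * (k + 2)).choose (k + 2) = (2 * k + 3).choose (k + 1)
      + (2 * k + 3).choose (k + 2) := by
    have h6 : 2 * (k + 2) = (2 * k + 3) + 1 := by omega
    rw [h6]
    exact Nat.choose_succ_succ (2 * k + 3) (k + 1)
  have f4 : (2 * k + 3).choose (k + 2) = (2 * k + 3).choose (k + 1) := by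
    have h := Nat.choose_symm (by omega : k + 1 ≤ 2 * k + 3)
    have h2 : 2 * k + 3 - (k + 1) = k + 2 := by omega
    rw [h2] at h
    exact h
  have hc : (k + 3) * catalan (k + 2) = 2 * ((2 * k + 3).choose (k + 1)) := by
    rw [f2, f2', f3, f4]
    ring
  refine Nat.eq_of_mul_eq_mul_left (show 0 < k + 3 by omega) ?_
  rw [Nat.mul_add, hc]
  have h7 : (k + 3) * ((2 * k + 3).choose (k + 1))
      = 2 * ((2 * k + 3).choose (k + 1)) + ((2 * k + 3).choose (k + 1)) * (k + 1) := by ring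
  rw [h7, f1]
  ring

lemma main_dim :
    Module.finrank ℂ (LinearMap.ker (phiLin (k + 2) (k + 1) rfl)) = catalan (k + 2) := by
  rw [ker_phi_eq_ker_comp]
  rw [LinearMap.ker_comp]
  rw [Submodule.comap_equiv_eq_map_symm]
  rw [LinearEquiv.finrank_map_eq]
  rw [ker_eig_eq_ker_D]
  have h1 := finrank_ker_D k
  have h2 := cat_arith k
  have h3 : Nat.choose (NN) k = (2 * k + 3).choose k := by
    congr 1
    omega
  have h4 : Nat.choose (NN) (k + 1) = (2 * k + 3).choose (k + 1) := by
    congr 1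
    omega
  omega

end Main
end CatAux


/-- With `m = n - 1`, the dimension of `ker φ` (which realizes
`ρ_{n,3}`) equals the `n`-th Catalan number `C_n = (1/(n+1))·binom(2n, n)`. -/
theorem dim_ker_phi_eq_catalan (n : ℕ) (hn : 2 ≤ n) :
    Module.finrank ℂ (LinearMap.ker (phiLin n (n - 1) (by omega))) = catalan n ∧
    (n + 1) * catalan n = (2 * n).choose n := by
  obtain ⟨k, rfl⟩ : ∃ k, n = k + 2 := ⟨n - 2, by omega⟩
  constructor
  · exact CatAux.main_dim k
  · exact (succ_mul_catalan_eq_centralBinom (k + 2)).trans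
      (Nat.centralBinom_eq_two_mul_choose (k + 2))
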